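/- Let $x : [0,T] \to [0,\infty)$ be a $C^1$ function, $m \ge 1$ an integer, and $M > 0$. Suppose that for all $t \in [0,T]$, if $x(t) \ge M$ then $x'(t) \le -(2m-1)\, x(t)^{2m/(2m-1)}$. Then for all $t \in (0,T]$, $x(t) \le \max(M, t^{-(2m-1)})$. -/
import Mathlib


/-- ODE comparison argument from Lemma 4.4 of the paper: if `x : [0,T] → [0,∞)` is
`C¹` (with derivative `x'`) and whenever `x(t) ≥ M` one has
`x'(t) ≤ -(2m-1) x(t)^{2m/(2m-1)}`, then `x(t) ≤ max(M, t^{-(2m-1)})` for `t ∈ (0,T]`. -/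
theorem stmt7 (T : ℝ) (hT : 0 < T) (m : ℕ) (hm : 1 ≤ m) (M : ℝ) (hM : 0 < M)
    (x x' : ℝ → ℝ)
    (hderiv : ∀ t ∈ Set.Icc (0:ℝ) T, HasDerivAt x (x' t) t)
    (hC1 : ContinuousOn x' (Set.Icc (0:ℝ) T))
    (hnonneg : ∀ t ∈ Set.Icc (0:ℝ) T, 0 ≤ x t)
    (hode : ∀ t ∈ Set.Icc (0:ℝ) T, M ≤ x t →
      x' t ≤ -(2 * (m : ℝ) - 1) * x t ^ (2 * (m : ℝ) / (2 * (m : ℝ) - 1))) :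
    ∀ t ∈ Set.Ioc (0:ℝ) T, x t ≤ max M (t ^ (-(2 * (m : ℝ) - 1))) := by
  set a : ℝ := 2 * (m : ℝ) - 1 with ha_def
  have hm1 : (1:ℝ) ≤ (m:ℝ) := by exact_mod_cast hm
  have ha1 : (1:ℝ) ≤ a := by simp only [ha_def]; linarith
  have ha0 : (0:ℝ) < a := by linarith
  have hane : a ≠ 0 := ne_of_gt ha0
  have hexp : 2 * (m:ℝ) / a = 1 + a⁻¹ := by
    field_simp
    simp only [ha_def]; ring
  -- continuity of x on [0,T]
  have hxc : ContinuousOn x (Set.Icc (0:ℝ) T) := fun s hs =>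
    (hderiv s hs).continuousAt.continuousWithinAt
  -- the function g
  set g : ℝ → ℝ := fun u => x u ^ (-a⁻¹) - u with hg_def
  -- key monotonicity lemma
  have key : ∀ σ τ : ℝ, 0 ≤ σ → σ ≤ τ → τ ≤ T →
      (∀ s ∈ Set.Icc σ τ, 0 < x s) → (∀ s ∈ Set.Ioo σ τ, M ≤ x s) →
      g σ ≤ g τ := by
    intro σ τ hσ0 hστ hτT hpos hMle
    have hsubset : Set.Icc σ τ ⊆ Set.Icc (0:ℝ) T := fun s hs =>
      ⟨le_trans hσ0 hs.1, le_trans hs.2 hτT⟩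
    have hintsub : interior (Set.Icc σ τ) ⊆ Set.Ioo σ τ := by
      rw [interior_Icc]
    -- derivative facts on interior
    have hgderiv : ∀ s ∈ Set.Ioo σ τ,
        HasDerivAt g (x' s * (-a⁻¹) * x s ^ (-a⁻¹ - 1) - 1) s := by
      intro s hs
      have hs' : s ∈ Set.Icc (0:ℝ) T := hsubset (Set.Ioo_subset_Icc_self hs)
      have hxpos : 0 < x s := hpos s (Set.Ioo_subset_Icc_self hs)
      exact ((hderiv s hs').rpow_const (Or.inl (ne_of_gt hxpos))).sub (hasDerivAt_id s)
    have hgcont : ContinuousOn g (Set.Icc σ τ) := by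
      apply ContinuousOn.sub _ continuousOn_id
      exact (hxc.mono hsubset).rpow_const fun s hs => Or.inl (ne_of_gt (hpos s hs))
    have hdiff : DifferentiableOn ℝ g (interior (Set.Icc σ τ)) := by
      intro s hs
      exact ((hgderiv s (hintsub hs)).differentiableAt).differentiableWithinAt
    have hnn : ∀ s ∈ interior (Set.Icc σ τ), 0 ≤ deriv g s := by
      intro s hs
      replace hs := hintsub hs
      have hs' : s ∈ Set.Icc (0:ℝ) T := hsubset (Set.Ioo_subset_Icc_self hs)
      have hxpos : 0 < x s := hpos s (Set.Ioo_subset_Icc_self hs)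
      have hMx : M ≤ x s := hMle s hs
      rw [(hgderiv s hs).deriv]
      have hode' : x' s ≤ -a * x s ^ ((1:ℝ) + a⁻¹) := by
        have := hode s hs' hMx
        rwa [hexp] at this
      -- multiply by the negative number (-a⁻¹) * x s ^ (-a⁻¹ - 1)
      have hc : (0:ℝ) < a⁻¹ * x s ^ (-a⁻¹ - 1) := by positivity
      have h1 : x' s * (-a⁻¹) * x s ^ (-a⁻¹ - 1)
          ≥ (-a * x s ^ ((1:ℝ) + a⁻¹)) * (-a⁻¹) * x s ^ (-a⁻¹ - 1) := by
        have := mul_le_mul_of_nonneg_right hode' (le_of_lt hc)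
        nlinarith [this]
      have hxx : x s ^ ((1:ℝ) + a⁻¹) * x s ^ (-a⁻¹ - 1) = 1 := by
        rw [← Real.rpow_add hxpos, show (1:ℝ) + a⁻¹ + (-a⁻¹ - 1) = 0 by ring, Real.rpow_zero]
      have h2 : (-a * x s ^ ((1:ℝ) + a⁻¹)) * (-a⁻¹) * x s ^ (-a⁻¹ - 1) = 1 := by
        have : (-a * x s ^ ((1:ℝ) + a⁻¹)) * (-a⁻¹) * x s ^ (-a⁻¹ - 1)
            = (a * a⁻¹) * (x s ^ ((1:ℝ) + a⁻¹) * x s ^ (-a⁻¹ - 1)) := by ring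
        rw [this, hxx, mul_inv_cancel₀ hane, mul_one]
      linarith [h1, h2.symm ▸ h1]
    have := monotoneOn_of_deriv_nonneg (convex_Icc σ τ) hgcont hdiff hnn
    exact this (Set.left_mem_Icc.2 hστ) (Set.right_mem_Icc.2 hστ) hστ
  -- main argument
  intro t ht
  obtain ⟨ht0, htT⟩ := ht
  have htmem : t ∈ Set.Icc (0:ℝ) T := ⟨le_of_lt ht0, htT⟩
  by_cases hxt : x t ≤ M
  · exact le_trans hxt (le_max_left _ _)
  push_neg at hxt
  by_cases hall : ∀ s ∈ Set.Icc 0 t, M ≤ x s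
  · -- case A : x ≥ M on all of [0,t]; conclude x t ≤ t^(-a)
    have hpos : ∀ s ∈ Set.Icc (0:ℝ) t, 0 < x s := fun s hs => lt_of_lt_of_le hM (hall s hs)
    have hkey := key 0 t le_rfl (le_of_lt ht0) htT hpos
      (fun s hs => hall s (Set.Ioo_subset_Icc_self hs))
    have h0 : (0:ℝ) ≤ x 0 ^ (-a⁻¹) := Real.rpow_nonneg (le_of_lt (hpos 0 ⟨le_rfl, le_of_lt ht0⟩)) _
    have h1 : t ≤ x t ^ (-a⁻¹) := by
      simp only [hg_def] at hkey
      linarith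
    have hxtpos : 0 < x t := hpos t ⟨le_of_lt ht0, le_rfl⟩
    have h2 : x t ≤ t ^ (-a) := by
      have h3 : (x t ^ (-a⁻¹)) ^ (-a) ≤ t ^ (-a) :=
        Real.rpow_le_rpow_of_nonpos ht0 h1 (by linarith)
      have h4 : (x t ^ (-a⁻¹)) ^ (-a) = x t := by
        rw [← Real.rpow_mul (le_of_lt hxtpos)]
        have : -a⁻¹ * -a = 1 := by field_simp
        rw [this, Real.rpow_one]
      linarith [h3, h4 ▸ h3]
    exact le_trans h2 (le_max_right _ _)
  · -- case B : x drops below M somewhere on [0,t]; derive contradiction with M < x t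
    exfalso
    push_neg at hall
    obtain ⟨s, hs, hsM⟩ := hall
    -- IVT gives a point where x = M
    have hsub : Set.Icc s t ⊆ Set.Icc (0:ℝ) T := fun u hu =>
      ⟨le_trans hs.1 hu.1, le_trans hu.2 htT⟩
    have hst : s ≤ t := hs.2
    have hIVT : M ∈ x '' Set.Icc s t := by
      apply intermediate_value_Icc hst (hxc.mono hsub)
      exact ⟨le_of_lt hsM, le_of_lt hxt⟩
    obtain ⟨σ0, hσ0, hσ0M⟩ := hIVT
    -- the set of points in [0,t] where x equals M
    set E : Set ℝ := {u | u ∈ Set.Icc (0:ℝ) t ∧ x u = M} with hE_def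
    have hEne : E.Nonempty := ⟨σ0, ⟨⟨le_trans hs.1 hσ0.1, hσ0.2⟩, hσ0M⟩⟩
    have hEclosed : IsClosed E := by
      have : E = Set.Icc (0:ℝ) t ∩ x ⁻¹' {M} := by
        ext u; simp [hE_def, Set.mem_inter_iff, and_comm]
      rw [this]
      exact ContinuousOn.preimage_isClosed_of_isClosed
        (hxc.mono (fun u hu => ⟨hu.1, le_trans hu.2 htT⟩)) isClosed_Icc isClosed_singleton
    have hEcompact : IsCompact E :=
      IsCompact.of_isClosed_subset isCompact_Icc hEclosed (fun u hu => hu.1)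
    set τ := sSup E with hτ_def
    have hτE : τ ∈ E := hEcompact.sSup_mem hEne
    have hτt : τ ≤ t := hτE.1.2
    have hτ0 : 0 ≤ τ := hτE.1.1
    have hτM : x τ = M := hτE.2
    have hτlt : τ < t := lt_of_le_of_ne hτt (by intro h; rw [h] at hτM; linarith)
    -- x ≥ M on (τ, t)
    have hMon : ∀ u ∈ Set.Ioo τ t, M ≤ x u := by
      intro u hu
      by_contra hcon
      push_neg at hcon
      have hsub' : Set.Icc u t ⊆ Set.Icc (0:ℝ) T := fun v hv =>
        ⟨le_trans (le_trans hτ0 (le_of_lt hu.1)) hv.1, le_trans hv.2 htT⟩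
      have : M ∈ x '' Set.Icc u t := by
        apply intermediate_value_Icc (le_of_lt hu.2) (hxc.mono hsub')
        exact ⟨le_of_lt hcon, le_of_lt hxt⟩
      obtain ⟨v, hv, hvM⟩ := this
      have hvE : v ∈ E := ⟨⟨le_trans (le_trans hτ0 (le_of_lt hu.1)) hv.1, hv.2⟩, hvM⟩
      have : v ≤ τ := le_csSup hEcompact.bddAbove hvE
      linarith [hu.1, hv.1]
    -- positivity on [τ, t]
    have hpos : ∀ u ∈ Set.Icc τ t, 0 < x u := by
      intro u hu
      rcases eq_or_lt_of_le hu.1 with h | h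
      · rw [← h, hτM]; exact hM
      rcases eq_or_lt_of_le hu.2 with h' | h'
      · rw [h']; linarith
      exact lt_of_lt_of_le hM (hMon u ⟨h, h'⟩)
    have hkey := key τ t hτ0 (le_of_lt hτlt) htT hpos hMon
    simp only [hg_def, hτM] at hkey
    -- so x t ^ (-a⁻¹) ≥ M ^ (-a⁻¹) + (t - τ) > M ^ (-a⁻¹)
    have h1 : M ^ (-a⁻¹) < x t ^ (-a⁻¹) := by linarith
    have h2 : x t ^ (-a⁻¹) ≤ M ^ (-a⁻¹) :=
      Real.rpow_le_rpow_of_nonpos hM (le_of_lt hxt) (neg_nonpos.mpr (by positivity))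
    linarith
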